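/- Let V be a quadratic or bilinear R-module with unique base and isotypical components V_λ (λ ∈ Λ). Then V = ⊥_{λ ∈ Λ'} V_λ where Λ' = {λ : V_λ ≠ 0}, and every isometry σ: V → V' onto another such module maps each indecomposable component of V onto an indecomposable component of V' of the same type, so σ(V_λ) = V'_λ for every λ. -/

import Mathlib

universe u

/-- `B` is a base of the `R`-module `V`. -/
def IsBaseSet (R : Type*) [CommSemiring R] {V : Type*} [AddCommMonoid V] [Module R V]
    (B : Set V) : Prop :=
  ∀ x : V, ∃! c : B →₀ R, x = c.sum fun b r => r • (b : V)

/-- `V` is the internal direct sum of the family of submodules `W i`. -/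
def IsInternalSum {R : Type*} [CommSemiring R] {V : Type*} [AddCommMonoid V] [Module R V]
    {ι : Type*} (W : ι → Submodule R V) : Prop :=
  ∀ x : V, ∃! c : ι →₀ V, (∀ i, c i ∈ W i) ∧ x = c.sum fun _ v => v

/-- A quadratic `R`-module datum: a carrier with a quadratic form and a chosen base. -/
structure QMod (R : Type u) [CommSemiring R] where
  carrier : Type u
  [acm : AddCommMonoid carrier]
  [mod : Module R carrier]
  q : carrier → R
  base : Set carrier

attribute [instance] QMod.acm QMod.mod

namespace QMod
variable {R : Type u} [CommSemiring R]

/-- quasilinearity of the form of `M` on `S × T`. -/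
def Qlin (M : QMod R) (S T : Set M.carrier) : Prop :=
  ∀ x ∈ S, ∀ y ∈ T, M.q (x + y) = M.q x + M.q y

/-- `M` is a quadratic module (its form admits a symmetric bilinear companion) whose
chosen base is a base, and `M` has unique base. -/
def Good (M : QMod R) : Prop :=
  (∀ (a : R) (x : M.carrier), M.q (a • x) = a * a * M.q x) ∧
  (∃ b : M.carrier →ₗ[R] M.carrier →ₗ[R] R,
      (∀ x y, b x y = b y x) ∧ ∀ x y, M.q (x + y) = M.q x + M.q y + b x y) ∧
  IsBaseSet R M.base ∧
  (∀ B' : Set M.carrier, IsBaseSet R B' →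
    ∀ v ∈ B', ∃ u : Rˣ, ∃ w ∈ M.base, v = (u : R) • w)

/-- `W₁` is disjointly orthogonal to `W₂` in `M`. -/
def DisjOrth (M : QMod R) (W₁ W₂ : Submodule R M.carrier) : Prop :=
  W₁ ⊓ W₂ = ⊥ ∧ M.Qlin (W₁ : Set M.carrier) (W₂ : Set M.carrier)

/-- Two distinct base vectors are joined by an edge iff `q` is not quasilinear on the
pair of lines they span (equivalently, any quasiminimal companion is nonzero on them). -/
def edge (M : QMod R) (x y : M.carrier) : Prop :=
  x ∈ M.base ∧ y ∈ M.base ∧ x ≠ y ∧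
    ¬ M.Qlin (Submodule.span R {x} : Submodule R M.carrier)
        (Submodule.span R {y} : Submodule R M.carrier)

/-- The equivalence class of the base vector `x` under chains of edges. -/
def comp (M : QMod R) (x : M.carrier) : Set M.carrier :=
  {y ∈ M.base | x = y ∨ Relation.TransGen M.edge x y}

/-- The bases of the indecomposable components of `M`. -/
def comps (M : QMod R) : Set (Set M.carrier) := {C | ∃ x ∈ M.base, C = M.comp x}

/-- Isometry of quadratic modules. -/
def Isom (M N : QMod R) : Prop :=
  ∃ e : M.carrier ≃ₗ[R] N.carrier, ∀ x, N.q (e x) = M.q x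

/-- `M` is indecomposable: no nontrivial disjoint orthogonal decomposition into
basic submodules. -/
def Indecomp (M : QMod R) : Prop :=
  ¬ ∃ S₁ S₂ : Set M.carrier, S₁ ∪ S₂ = M.base ∧ Disjoint S₁ S₂ ∧ S₁.Nonempty ∧ S₂.Nonempty ∧
      M.DisjOrth (Submodule.span R S₁) (Submodule.span R S₂)

/-- The quadratic module carried by the basic submodule spanned by `C`. -/
def restrict (M : QMod R) (C : Set M.carrier) : QMod R where
  carrier := ↥(Submodule.span R C)
  q := fun x => M.q (x : M.carrier)
  base := {v : ↥(Submodule.span R C) | (v : M.carrier) ∈ C}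

/-- The number (a cardinal) of indecomposable components of `M` isometric to `N`. -/
noncomputable def mult (M N : QMod R) : Cardinal :=
  Cardinal.mk {C : Set M.carrier // C ∈ M.comps ∧ (M.restrict C).Isom N}

/-- External orthogonal sum `M ⊥ N` of two quadratic modules. -/
def orthSum (M N : QMod R) : QMod R where
  carrier := M.carrier × N.carrier
  q := fun p => M.q p.1 + N.q p.2
  base := (fun x => (x, (0 : N.carrier))) '' M.base ∪
    (fun y => ((0 : M.carrier), y)) '' N.base

/-- External orthogonal sum of `I`-many copies of `M`. -/
noncomputable def pow (M : QMod R) (I : Type u) : QMod R where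
  carrier := I →₀ M.carrier
  q := fun f => f.sum fun _ x => M.q x
  base := {f | ∃ i, ∃ v ∈ M.base, f = Finsupp.single i v}

end QMod

/-- A bilinear `R`-module datum: a carrier with a symmetric bilinear form and a base. -/
structure BMod (R : Type u) [CommSemiring R] where
  carrier : Type u
  [acm : AddCommMonoid carrier]
  [mod : Module R carrier]
  b : carrier → carrier → R
  base : Set carrier

attribute [instance] BMod.acm BMod.mod

namespace BMod
variable {R : Type u} [CommSemiring R]

/-- `M` is a bilinear module (`b` symmetric bilinear) whose chosen base is a base,
and `M` has unique base. -/
def Good (M : BMod R) : Prop :=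
  (∀ x y, M.b x y = M.b y x) ∧
  (∀ x y z, M.b (x + y) z = M.b x z + M.b y z) ∧
  (∀ (a : R) (x y : M.carrier), M.b (a • x) y = a * M.b x y) ∧
  IsBaseSet R M.base ∧
  (∀ B' : Set M.carrier, IsBaseSet R B' →
    ∀ v ∈ B', ∃ u : Rˣ, ∃ w ∈ M.base, v = (u : R) • w)

/-- `W₁` is disjointly orthogonal to `W₂` in `M`. -/
def DisjOrth (M : BMod R) (W₁ W₂ : Submodule R M.carrier) : Prop :=
  W₁ ⊓ W₂ = ⊥ ∧ ∀ x ∈ W₁, ∀ y ∈ W₂, M.b x y = 0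

/-- Edges between distinct base vectors: nonzero `b_alt`-value. -/
def edge (M : BMod R) (x y : M.carrier) : Prop :=
  x ∈ M.base ∧ y ∈ M.base ∧ x ≠ y ∧ M.b x y ≠ 0

/-- The equivalence class of the base vector `x` under chains of edges. -/
def comp (M : BMod R) (x : M.carrier) : Set M.carrier :=
  {y ∈ M.base | x = y ∨ Relation.TransGen M.edge x y}

/-- The bases of the indecomposable components of `M`. -/
def comps (M : BMod R) : Set (Set M.carrier) := {C | ∃ x ∈ M.base, C = M.comp x}

/-- Isometry of bilinear modules. -/
def Isom (M N : BMod R) : Prop :=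
  ∃ e : M.carrier ≃ₗ[R] N.carrier, ∀ x y, N.b (e x) (e y) = M.b x y

/-- `M` is indecomposable. -/
def Indecomp (M : BMod R) : Prop :=
  ¬ ∃ S₁ S₂ : Set M.carrier, S₁ ∪ S₂ = M.base ∧ Disjoint S₁ S₂ ∧ S₁.Nonempty ∧ S₂.Nonempty ∧
      M.DisjOrth (Submodule.span R S₁) (Submodule.span R S₂)

/-- The bilinear module carried by the basic submodule spanned by `C`. -/
def restrict (M : BMod R) (C : Set M.carrier) : BMod R where
  carrier := ↥(Submodule.span R C)
  b := fun x y => M.b (x : M.carrier) (y : M.carrier)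
  base := {v : ↥(Submodule.span R C) | (v : M.carrier) ∈ C}

/-- The number of indecomposable components of `M` isometric to `N`. -/
noncomputable def mult (M N : BMod R) : Cardinal :=
  Cardinal.mk {C : Set M.carrier // C ∈ M.comps ∧ (M.restrict C).Isom N}

/-- External orthogonal sum `M ⊥ N`. -/
def orthSum (M N : BMod R) : BMod R where
  carrier := M.carrier × N.carrier
  b := fun p p' => M.b p.1 p'.1 + N.b p.2 p'.2
  base := (fun x => (x, (0 : N.carrier))) '' M.base ∪
    (fun y => ((0 : M.carrier), y)) '' N.base

/-- External orthogonal sum of `I`-many copies of `M`. -/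
noncomputable def pow (M : BMod R) (I : Type u) : BMod R where
  carrier := I →₀ M.carrier
  b := fun f g => f.sum fun i x => M.b x (g i)
  base := {f | ∃ i, ∃ v ∈ M.base, f = Finsupp.single i v}

end BMod

section Coord
variable {R : Type u} [CommSemiring R] {V : Type u} [AddCommMonoid V] [Module R V]
  {B : Set V} (hB : IsBaseSet R B)
include hB

noncomputable def coordFn (hB : IsBaseSet R B) (x : V) : B →₀ R := (hB x).choose

theorem coord_spec (x : V) : x = (coordFn hB x).sum fun b r => r • (b : V) :=
  (hB x).choose_spec.1

theorem coord_unique {x : V} {c : B →₀ R} (h : x = c.sum fun b r => r • (b : V)) :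
    c = coordFn hB x :=
  ((hB x).choose_spec.2 c h)

theorem coord_eq_iff {x : V} {c : B →₀ R} :
    coordFn hB x = c ↔ x = c.sum fun b r => r • (b : V) :=
  ⟨fun h => h ▸ coord_spec hB x, fun h => (coord_unique hB h).symm⟩

theorem coord_zero : coordFn hB (0 : V) = 0 :=
  ((coord_unique hB (by simp [Finsupp.sum_zero_index])).symm)

theorem coord_add (x y : V) : coordFn hB (x + y) = coordFn hB x + coordFn hB y := by
  refine (coord_unique hB ?_).symm
  rw [Finsupp.sum_add_index' (by simp) (by intro b r s; rw [add_smul])]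
  rw [← coord_spec hB x, ← coord_spec hB y]

theorem coord_smul (a : R) (x : V) : coordFn hB (a • x) = a • coordFn hB x := by
  refine (coord_unique hB ?_).symm
  rw [Finsupp.sum_smul_index (fun b => by rw [zero_smul])]
  simp_rw [mul_smul]
  rw [← Finsupp.smul_sum, ← coord_spec hB x]

theorem coord_base (v : V) (hv : v ∈ B) :
    coordFn hB v = Finsupp.single (⟨v, hv⟩ : B) 1 := by
  refine (coord_unique hB ?_).symm
  rw [Finsupp.sum_single_index (by rw [zero_smul])]
  rw [one_smul]

theorem coord_inj {x y : V} (h : coordFn hB x = coordFn hB y) : x = y := by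
  rw [coord_spec hB x, coord_spec hB y, h]

omit hB in
theorem subsingleton_of_one_eq_zero (h : (1 : R) = 0) : ∀ z w : V, z = w := by
  intro z w
  have hz : ∀ u : V, u = 0 := fun u => by
    rw [← one_smul R u, h, zero_smul]
  rw [hz z, hz w]

/-- two base vectors related by a unit scalar are equal -/
theorem base_unit_smul_eq {v w : V} (hv : v ∈ B) (hw : w ∈ B) (u : Rˣ)
    (h : v = (u : R) • w) : v = w := by
  by_cases hvw : v = w
  · exact hvw
  classical
  have h1 : coordFn hB v = Finsupp.single (⟨v, hv⟩ : B) 1 := coord_base hB v hv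
  have h2 : coordFn hB v = Finsupp.single (⟨w, hw⟩ : B) (u : R) := by
    rw [h, coord_smul, coord_base hB w hw, Finsupp.smul_single, smul_eq_mul, mul_one]
  have heq := h1.symm.trans h2
  have h3 : (1 : R) = 0 := by
    have := DFunLike.congr_fun heq (⟨v, hv⟩ : B)
    simpa [Finsupp.single_apply, Subtype.ext_iff, Ne.symm hvw, hvw] using this
  exact subsingleton_of_one_eq_zero (R := R) h3 v w

theorem mem_span_iff_coord_support {S : Set V} (hS : S ⊆ B) (x : V) :
    x ∈ Submodule.span R S ↔ ∀ b ∈ (coordFn hB x).support, (b : V) ∈ S := by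
  classical
  constructor
  · intro hx
    induction hx using Submodule.span_induction with
    | mem z hz =>
      classical
      intro b hb
      rw [coord_base hB z (hS hz)] at hb
      rcases Finset.mem_singleton.1 (Finsupp.support_single_subset hb) with rfl
      exact hz
    | zero => rw [coord_zero]; simp
    | add y z _ _ hy hz =>
      intro b hb
      rw [coord_add] at hb
      rcases Finset.mem_union.1 (Finsupp.support_add hb) with h | h
      · exact hy b h
      · exact hz b h
    | smul a y _ hy =>
      intro b hb
      rw [coord_smul] at hb
      exact hy b (Finsupp.support_smul hb)
  · intro h
    rw [coord_spec hB x]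
    refine Submodule.sum_mem _ fun b hb => Submodule.smul_mem _ _ ?_
    exact Submodule.subset_span (h b hb)

theorem span_inf_eq_bot {S T : Set V} (hS : S ⊆ B) (hT : T ⊆ B)
    (hd : Disjoint S T) : Submodule.span R S ⊓ Submodule.span R T = ⊥ := by
  rw [eq_bot_iff]
  intro x hx
  obtain ⟨hx1, hx2⟩ := Submodule.mem_inf.1 hx
  rw [mem_span_iff_coord_support hB hS] at hx1
  rw [mem_span_iff_coord_support hB hT] at hx2
  have : coordFn hB x = 0 := by
    ext b
    by_contra hb
    have hb' : b ∈ (coordFn hB x).support := Finsupp.mem_support_iff.2 hb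
    exact (Set.disjoint_left.1 hd (hx1 b hb')) (hx2 b hb')
  have : x = 0 := by rw [coord_spec hB x, this, Finsupp.sum_zero_index]
  simpa using this

end Coord

section Comps
variable {V : Type u} (r : V → V → Prop) (B : Set V)

def gcomp (x : V) : Set V := {y ∈ B | x = y ∨ Relation.TransGen r x y}

variable {r B}

theorem transGen_symm (hsym : ∀ x y, r x y → r y x) {x y : V}
    (h : Relation.TransGen r x y) : Relation.TransGen r y x := by
  induction h with
  | single h => exact Relation.TransGen.single (hsym _ _ h)
  | tail _ h ih => exact Relation.TransGen.trans (Relation.TransGen.single (hsym _ _ h)) ih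

theorem grel_symm (hsym : ∀ x y, r x y → r y x) {x y : V}
    (h : x = y ∨ Relation.TransGen r x y) : y = x ∨ Relation.TransGen r y x := by
  rcases h with rfl | h
  · exact Or.inl rfl
  · exact Or.inr (transGen_symm hsym h)

theorem grel_trans {x y z : V} (h1 : x = y ∨ Relation.TransGen r x y)
    (h2 : y = z ∨ Relation.TransGen r y z) : x = z ∨ Relation.TransGen r x z := by
  rcases h1 with rfl | h1
  · exact h2
  rcases h2 with rfl | h2
  · exact Or.inr h1
  · exact Or.inr (h1.trans h2)

theorem mem_gcomp_self {x : V} (hx : x ∈ B) : x ∈ gcomp r B x := ⟨hx, Or.inl rfl⟩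

theorem gcomp_subset_base (x : V) : gcomp r B x ⊆ B := fun _ hy => hy.1

theorem gcomp_eq_of_mem (hsym : ∀ x y, r x y → r y x) {x y : V}
    (hy : y ∈ gcomp r B x) : gcomp r B y = gcomp r B x := by
  obtain ⟨hyB, hxy⟩ := hy
  ext z
  constructor
  · rintro ⟨hzB, hyz⟩
    exact ⟨hzB, grel_trans hxy hyz⟩
  · rintro ⟨hzB, hxz⟩
    exact ⟨hzB, grel_trans (grel_symm hsym hxy) hxz⟩

/-- no `r`-relation between members of distinct components -/
theorem not_r_of_gcomp_ne (hsym : ∀ x y, r x y → r y x)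
    (hmem : ∀ x y, r x y → x ∈ B ∧ y ∈ B) {x y u v : V}
    (hu : u ∈ gcomp r B x) (hv : v ∈ gcomp r B y)
    (hne : gcomp r B x ≠ gcomp r B y) : u ≠ v ∧ ¬ r u v := by
  constructor
  · rintro rfl
    exact hne ((gcomp_eq_of_mem hsym hu).symm.trans (gcomp_eq_of_mem hsym hv))
  · intro huv
    have h1 : v ∈ gcomp r B u := ⟨(hmem u v huv).2, Or.inr (Relation.TransGen.single huv)⟩
    exact hne (((gcomp_eq_of_mem hsym hu).symm.trans
      (gcomp_eq_of_mem hsym h1).symm).trans (gcomp_eq_of_mem hsym hv))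

end Comps

section Regions
variable {R : Type u} [CommSemiring R] {V : Type u} [AddCommMonoid V] [Module R V]
  {B : Set V} {r : V → V → Prop} {Λ : Type u} {𝒞 : Λ → Set (Set V)}

variable (hB : IsBaseSet R B)
variable (hsym : ∀ x y, r x y → r y x)
variable (hmem : ∀ x y, r x y → x ∈ B ∧ y ∈ B)
variable (h1 : ∀ l C, C ∈ 𝒞 l → ∃ x ∈ B, C = gcomp r B x)
variable (h2 : ∀ l m C, C ∈ 𝒞 l → C ∈ 𝒞 m → l = m)
variable (h3 : ∀ x ∈ B, ∃ l, gcomp r B x ∈ 𝒞 l)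

include h1 in
theorem region_subset_base {l : Λ} : ⋃₀ 𝒞 l ⊆ B := by
  rintro u ⟨C, hC, huC⟩
  obtain ⟨x, hx, rfl⟩ := h1 l C hC
  exact (gcomp_subset_base x) huC

include hsym h1 in
/-- membership in a region forces the component -/
theorem gcomp_mem_of_mem_region {l : Λ} {u : V} (hu : u ∈ ⋃₀ 𝒞 l) :
    gcomp r B u ∈ 𝒞 l := by
  obtain ⟨C, hC, huC⟩ := hu
  obtain ⟨x, hx, rfl⟩ := h1 l C hC
  rwa [gcomp_eq_of_mem hsym huC]

include hsym h1 h2 in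
theorem region_disjoint {l m : Λ} (hlm : l ≠ m) :
    Disjoint (⋃₀ 𝒞 l) (⋃₀ 𝒞 m) := by
  rw [Set.disjoint_left]
  intro u hul hum
  exact hlm (h2 l m _ (gcomp_mem_of_mem_region hsym h1 hul)
    (gcomp_mem_of_mem_region hsym h1 hum))

include hsym hmem h1 h2 in
theorem no_r_between_regions {l m : Λ} (hlm : l ≠ m) {u v : V}
    (hu : u ∈ ⋃₀ 𝒞 l) (hv : v ∈ ⋃₀ 𝒞 m) : u ≠ v ∧ ¬ r u v := by
  have hne : gcomp r B u ≠ gcomp r B v := by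
    intro h
    exact hlm (h2 l m _ (gcomp_mem_of_mem_region hsym h1 hu)
      (h ▸ gcomp_mem_of_mem_region hsym h1 hv))
  exact not_r_of_gcomp_ne hsym hmem
    (mem_gcomp_self ((region_subset_base h1) hu))
    (mem_gcomp_self ((region_subset_base h1) hv)) hne

/-- the type of a base vector -/
noncomputable def tType (h3 : ∀ x ∈ B, ∃ l, gcomp r B x ∈ 𝒞 l) (b : B) : Λ :=
  (h3 b b.2).choose

include h3 in
theorem tType_spec (b : B) : gcomp r B (b : V) ∈ 𝒞 (tType h3 b) :=
  (h3 b b.2).choose_spec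

include h3 in
theorem mem_region_tType (b : B) : (b : V) ∈ ⋃₀ 𝒞 (tType h3 b) :=
  ⟨gcomp r B (b : V), tType_spec h3 b, mem_gcomp_self b.2⟩

include hsym h1 h2 h3 in
theorem tType_eq_of_mem_region {l : Λ} {b : B} (hb : (b : V) ∈ ⋃₀ 𝒞 l) :
    tType h3 b = l :=
  h2 _ _ _ (tType_spec h3 b) (gcomp_mem_of_mem_region hsym h1 hb)

include hB h1 in
theorem coord_support_mem_region {l : Λ} {W : Submodule R V}
    (hW : W = Submodule.span R (⋃₀ 𝒞 l)) {y : V} (hy : y ∈ W) :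
    ∀ b ∈ (coordFn hB y).support, (b : V) ∈ ⋃₀ 𝒞 l := by
  rw [hW, mem_span_iff_coord_support hB (region_subset_base h1)] at hy
  exact hy

include hB hsym h1 h2 h3 in
theorem generic_internal_sum (W : Λ → Submodule R V)
    (hW : ∀ l, W l = Submodule.span R (⋃₀ 𝒞 l)) :
    IsInternalSum (fun l : {l : Λ // W l ≠ ⊥} => W l.1) := by
  classical
  intro x
  set d := coordFn hB x with hd
  set τ : B → Λ := tType h3 with hτ
  set f : Λ → V := fun l => ∑ b ∈ d.support.filter (fun b => τ b = l), d b • (b : V) with hf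
  have hfW : ∀ l, f l ∈ W l := by
    intro l
    rw [hW l]
    refine Submodule.sum_mem _ fun b hb => Submodule.smul_mem _ _ ?_
    rw [Finset.mem_filter] at hb
    exact Submodule.subset_span (hb.2 ▸ mem_region_tType h3 b)
  set S : Finset {l : Λ // W l ≠ ⊥} := (d.support.image τ).subtype (fun l => W l ≠ ⊥) with hS
  have hSg : ∀ i : {l : Λ // W l ≠ ⊥}, f i.1 ≠ 0 → i ∈ S := by
    intro i hi
    rw [hS, Finset.mem_subtype]
    by_contra hni
    have : d.support.filter (fun b => τ b = i.1) = ∅ := by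
      rw [Finset.filter_eq_empty_iff]
      intro b hb hbi
      exact hni (Finset.mem_image.2 ⟨b, hb, hbi⟩)
    rw [hf] at hi
    simp only [this, Finset.sum_empty] at hi
    exact hi rfl
  set c : {l : Λ // W l ≠ ⊥} →₀ V := Finsupp.onFinset S (fun i => f i.1) hSg with hc
  refine ⟨c, ⟨fun i => hfW i.1, ?_⟩, ?_⟩
  · -- x = c.sum
    rw [hc, Finsupp.onFinset_sum _ (fun _ => rfl)]
    have step1 : ∑ i ∈ S, f i.1 = ∑ l ∈ (d.support.image τ).filter (fun l => W l ≠ ⊥), f l := by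
      rw [hS]; exact Finset.sum_subtype_eq_sum_filter (fun l => f l)
    have step2 : ∑ l ∈ (d.support.image τ).filter (fun l => W l ≠ ⊥), f l
        = ∑ l ∈ d.support.image τ, f l := by
      refine Finset.sum_filter_of_ne ?_
      intro l _ hfl
      intro hbot
      exact hfl (by simpa [hbot] using hfW l)
    have step3 : ∑ l ∈ d.support.image τ, f l = ∑ b ∈ d.support, d b • (b : V) := by
      rw [hf]
      exact Finset.sum_fiberwise_of_maps_to (fun b hb => Finset.mem_image_of_mem τ hb) _
    rw [step1, step2, step3]
    exact coord_spec hB x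
  · -- uniqueness
    rintro c' ⟨hc'W, hc'x⟩
    have hcoordsum : d = ∑ j ∈ c'.support, coordFn hB (c' j) := by
      rw [hd, hc'x]
      rw [Finsupp.sum]
      exact map_sum (⟨⟨coordFn hB, coord_zero hB⟩, coord_add hB⟩ : V →+ (↑B →₀ R)) _ _
    have hsupp : ∀ (j : {l : Λ // W l ≠ ⊥}) (b : B),
        coordFn hB (c' j) b ≠ 0 → (b : V) ∈ ⋃₀ 𝒞 j.1 := by
      intro j b hb
      exact coord_support_mem_region hB h1 (hW j.1) (hc'W j) b
        (Finsupp.mem_support_iff.2 hb)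
    have key : ∀ i : {l : Λ // W l ≠ ⊥}, ∀ b : B,
        coordFn hB (c' i) b = if τ b = i.1 then d b else 0 := by
      intro i b
      by_cases hbi : τ b = i.1
      · rw [if_pos hbi]
        have hdb : d b = ∑ j ∈ c'.support, coordFn hB (c' j) b := by
          rw [hcoordsum, Finset.sum_apply']
        rw [hdb]
        refine (Finset.sum_eq_single (f := fun j => coordFn hB (c' j) b) i ?_ ?_).symm
        · intro j _ hji
          by_contra hne
          have hmem' : (b : V) ∈ ⋃₀ 𝒞 j.1 := hsupp j b hne
          have : τ b = j.1 := tType_eq_of_mem_region hsym h1 h2 h3 hmem'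
          exact hji (Subtype.ext (this.symm.trans hbi))
        · intro hi
          have h0 : c' i = 0 := Finsupp.notMem_support_iff.1 hi
          simp only [h0, coord_zero hB]
          rfl
      · rw [if_neg hbi]
        by_contra hne
        exact hbi (tType_eq_of_mem_region hsym h1 h2 h3 (hsupp i b hne))
    ext i
    have hci : c i = f i.1 := rfl
    have hcs : c' i = (coordFn hB (c' i)).sum fun b r => r • (b : V) := coord_spec hB _
    rw [hcs, hci, hf]
    have hsub : (coordFn hB (c' i)).support ⊆ d.support.filter (fun b => τ b = i.1) := by
      intro b hb
      have hbne := Finsupp.mem_support_iff.1 hb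
      rw [key i b] at hbne
      by_cases hbi : τ b = i.1
      · refine Finset.mem_filter.2 ⟨Finsupp.mem_support_iff.2 ?_, hbi⟩
        rwa [if_pos hbi] at hbne
      · rw [if_neg hbi] at hbne; exact absurd rfl hbne
    rw [Finsupp.sum_of_support_subset _ hsub _ (fun b _ => zero_smul R (b : V))]
    refine Finset.sum_congr rfl ?_
    intro b hb
    rw [key i b, if_pos (Finset.mem_filter.1 hb).2]

include hB hsym h1 h2 in
theorem generic_inf_bot {l m : Λ} (hlm : l ≠ m) (W : Λ → Submodule R V)
    (hW : ∀ l, W l = Submodule.span R (⋃₀ 𝒞 l)) : W l ⊓ W m = ⊥ := by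
  rw [hW l, hW m]
  exact span_inf_eq_bot hB (region_subset_base h1) (region_subset_base h1)
    (region_disjoint hsym h1 h2 hlm)

end Regions

section QlinSpan
variable {R : Type u} [CommSemiring R] {V : Type u} [AddCommMonoid V] [Module R V]

theorem span_le_addClosure (S : Set V) :
    (Submodule.span R S : Set V) ⊆
      (AddSubmonoid.closure {z : V | ∃ a : R, ∃ u ∈ S, z = a • u} : Set V) := by
  set D : Set V := {z : V | ∃ a : R, ∃ u ∈ S, z = a • u} with hD
  have hsmul : ∀ (a : R), ∀ x ∈ AddSubmonoid.closure D, a • x ∈ AddSubmonoid.closure D := by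
    intro a x hx
    induction hx using AddSubmonoid.closure_induction with
    | mem z hz =>
      obtain ⟨c, u, hu, rfl⟩ := hz
      exact AddSubmonoid.subset_closure ⟨a * c, u, hu, (mul_smul a c u).symm⟩
    | zero => rw [smul_zero]; exact AddSubmonoid.zero_mem _
    | add y z _ _ hy hz => rw [smul_add]; exact AddSubmonoid.add_mem _ hy hz
  set N : Submodule R V :=
    { carrier := AddSubmonoid.closure D
      add_mem' := fun ha hb => AddSubmonoid.add_mem _ ha hb
      zero_mem' := AddSubmonoid.zero_mem _
      smul_mem' := fun a x hx => hsmul a x hx } with hN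
  have hSN : S ⊆ N := fun u hu =>
    AddSubmonoid.subset_closure ⟨1, u, hu, (one_smul R u).symm⟩
  exact fun x hx => Submodule.span_le.2 hSN hx

variable (q : V → R) (bl : V →ₗ[R] V →ₗ[R] R)
  (hq0 : q (0 : V) = 0)
  (hcomp : ∀ x y, q (x + y) = q x + q y + bl x y)

include hcomp in
theorem absorb_left {x y t : V} (hx : q (x + t) = q x + q t) (hy : q (y + t) = q y + q t) :
    q (x + y + t) = q (x + y) + q t := by
  have e1 : q x + q t + bl x t = q x + q t := (hcomp x t).symm.trans hx
  have e2 : q y + q t + bl y t = q y + q t := (hcomp y t).symm.trans hy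
  have hb : bl (x + y) t = bl x t + bl y t := by
    rw [map_add]; rfl
  rw [hcomp (x + y) t, hcomp x y, hb]
  calc q x + q y + bl x y + q t + (bl x t + bl y t)
      = (q x + q t + bl x t) + (q y + bl x y + bl y t) := by ring
    _ = (q x + q t) + (q y + bl x y + bl y t) := by rw [e1]
    _ = (q y + q t + bl y t) + (q x + bl x y) := by ring
    _ = (q y + q t) + (q x + bl x y) := by rw [e2]
    _ = q x + q y + bl x y + q t := by ring

include hcomp in
theorem absorb_right {x t t' : V} (ht : q (x + t) = q x + q t) (ht' : q (x + t') = q x + q t') :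
    q (x + (t + t')) = q x + q (t + t') := by
  have h1 : q (t + x) = q t + q x := by rw [add_comm t x, ht, add_comm (q x)]
  have h2 : q (t' + x) = q t' + q x := by rw [add_comm t' x, ht', add_comm (q x)]
  have := absorb_left q bl hcomp h1 h2
  rw [add_comm (t + t') x] at this
  rw [this, add_comm (q (t + t'))]

include hq0 hcomp in
theorem qlin_span {S T : Set V}
    (h : ∀ u ∈ S, ∀ v ∈ T, ∀ a c : R, q (a • u + c • v) = q (a • u) + q (c • v)) :
    ∀ x ∈ Submodule.span R S, ∀ y ∈ Submodule.span R T, q (x + y) = q x + q y := by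
  set DS : Set V := {z : V | ∃ a : R, ∃ u ∈ S, z = a • u} with hDS
  set DT : Set V := {z : V | ∃ a : R, ∃ u ∈ T, z = a • u} with hDT
  -- Step 1 : all x in closure DS are quasilinear with each element of DT
  have step1 : ∀ x ∈ AddSubmonoid.closure DS, ∀ t ∈ DT, q (x + t) = q x + q t := by
    intro x hx
    induction hx using AddSubmonoid.closure_induction with
    | mem z hz =>
      intro t ht
      obtain ⟨a, u, hu, rfl⟩ := hz
      obtain ⟨c, v, hv, rfl⟩ := ht
      exact h u hu v hv a c
    | zero => intro t _; rw [zero_add, hq0, zero_add]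
    | add y z _ _ hy hz =>
      intro t ht
      exact absorb_left q bl hcomp (hy t ht) (hz t ht)
  -- Step 2 : extend to closure DT in the second argument
  have step2 : ∀ x ∈ AddSubmonoid.closure DS, ∀ y ∈ AddSubmonoid.closure DT,
      q (x + y) = q x + q y := by
    intro x hx y hy
    induction hy using AddSubmonoid.closure_induction with
    | mem z hz => exact step1 x hx z hz
    | zero => rw [add_zero, hq0, add_zero]
    | add t t' _ _ ht ht' => exact absorb_right q bl hcomp ht ht'
  intro x hx y hy
  exact step2 x (span_le_addClosure S hx) y (span_le_addClosure T hy)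

end QlinSpan

section BilinSpan
variable {R : Type u} [CommSemiring R] {V : Type u} [AddCommMonoid V] [Module R V]
  (bf : V → V → R)
  (hbsym : ∀ x y, bf x y = bf y x)
  (hbadd : ∀ x y z, bf (x + y) z = bf x z + bf y z)
  (hbsmul : ∀ (a : R) (x y : V), bf (a • x) y = a * bf x y)

include hbsym hbadd hbsmul in
theorem bform_span_zero {S T : Set V} (h : ∀ u ∈ S, ∀ v ∈ T, bf u v = 0) :
    ∀ x ∈ Submodule.span R S, ∀ y ∈ Submodule.span R T, bf x y = 0 := by
  have hzero : ∀ y : V, bf 0 y = 0 := by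
    intro y
    have : bf ((0 : R) • (0 : V)) y = 0 * bf 0 y := hbsmul 0 0 y
    simpa using this
  intro x hx
  induction hx using Submodule.span_induction with
  | mem u hu =>
    intro y hy
    induction hy using Submodule.span_induction with
    | mem v hv => exact h u hu v hv
    | zero => rw [hbsym]; exact hzero u
    | add y z _ _ hy hz => rw [hbsym, hbadd, hbsym y, hbsym z, hy, hz, add_zero]
    | smul a y _ hy => rw [hbsym, hbsmul, hbsym y, hy, mul_zero]
  | zero => intro y _; exact hzero y
  | add x z _ _ hx hz => intro y hy; rw [hbadd, hx y hy, hz y hy, add_zero]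
  | smul a x _ hx => intro y hy; rw [hbsmul, hx y hy, mul_zero]

end BilinSpan

section Transfer
variable {R : Type u} [CommSemiring R] {V : Type u} [AddCommMonoid V] [Module R V]
  {V' : Type u} [AddCommMonoid V'] [Module R V']
  {B : Set V} {B' : Set V'} (e : V ≃ₗ[R] V')

/-- the image of a base under a linear equivalence is a base -/
theorem isBaseSet_image (hB : IsBaseSet R B) : IsBaseSet R ((e : V → V') '' B) := by
  classical
  intro x'
  set κ : B ≃ ((e : V → V') '' B) := Equiv.Set.image (e : V → V') B e.injective with hκ
  have hsum : ∀ c : B →₀ R,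
      (Finsupp.equivMapDomain κ c).sum (fun b' r => r • (b' : V'))
        = e (c.sum fun b r => r • (b : V)) := by
    intro c
    rw [Finsupp.sum_equivMapDomain]
    rw [map_finsuppSum]
    refine Finsupp.sum_congr fun b _ => ?_
    rw [map_smul]
    rfl
  have hcomp : ∀ c' : (e : V → V') '' B →₀ R,
      Finsupp.equivMapDomain κ (Finsupp.equivMapDomain κ.symm c') = c' := by
    intro c'
    rw [← Finsupp.equivMapDomain_trans, Equiv.symm_trans_self, Finsupp.equivMapDomain_refl]
  refine ⟨Finsupp.equivMapDomain κ (coordFn hB (e.symm x')), ?_, ?_⟩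
  · show x' = (Finsupp.equivMapDomain κ (coordFn hB (e.symm x'))).sum fun b r => r • (b : V')
    rw [hsum, ← coord_spec hB (e.symm x'), e.apply_symm_apply]
  · intro c' hc'
    have hpull : e.symm x' = (Finsupp.equivMapDomain κ.symm c').sum fun b r => r • (b : V) := by
      apply e.injective
      rw [e.apply_symm_apply, ← hsum, hcomp c']
      exact hc'
    have hq := coord_unique hB hpull
    calc c' = Finsupp.equivMapDomain κ (Finsupp.equivMapDomain κ.symm c') := (hcomp c').symm
      _ = Finsupp.equivMapDomain κ (coordFn hB (e.symm x')) := by rw [hq]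

end Transfer

section Phi
variable {R : Type u} [CommSemiring R] {V : Type u} [AddCommMonoid V] [Module R V]
  {V' : Type u} [AddCommMonoid V'] [Module R V']
  {B : Set V} {B' : Set V'} {r : V → V → Prop} {r' : V' → V' → Prop}
  (e : V ≃ₗ[R] V') (φ : B → B') (ψ : B' → B)

theorem transGen_map (hmem : ∀ x y : V, r x y → x ∈ B ∧ y ∈ B)
    (hedge : ∀ v₁ v₂ : B, r (v₁ : V) (v₂ : V) → r' (φ v₁ : V') (φ v₂ : V'))
    (v : B) : ∀ (z : V), Relation.TransGen r (v : V) z →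
      ∀ (hz : z ∈ B), Relation.TransGen r' (φ v : V') (φ ⟨z, hz⟩ : V') := by
  intro z h
  induction h with
  | single h => intro hz; exact Relation.TransGen.single (hedge v ⟨_, hz⟩ h)
  | tail h₁ h₂ ih =>
    intro hz
    have hb := (hmem _ _ h₂).1
    exact (ih hb).tail (hedge ⟨_, hb⟩ ⟨_, hz⟩ h₂)

variable (hψφ : ∀ v, ψ (φ v) = v) (hφψ : ∀ w, φ (ψ w) = w)
  (hiff : ∀ v₁ v₂ : B, r (v₁ : V) (v₂ : V) ↔ r' (φ v₁ : V') (φ v₂ : V'))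
  (hmem : ∀ x y : V, r x y → x ∈ B ∧ y ∈ B)
  (hmem' : ∀ x y : V', r' x y → x ∈ B' ∧ y ∈ B')

include hψφ hφψ hiff hmem hmem' in
theorem gcomp_image (x : B) :
    gcomp r' B' (φ x : V') = {w : V' | ∃ v : B, (v : V) ∈ gcomp r B (x : V) ∧ w = (φ v : V')} := by
  have hiff' : ∀ w₁ w₂ : B', r' (w₁ : V') (w₂ : V') ↔ r (ψ w₁ : V) (ψ w₂ : V) := by
    intro w₁ w₂
    rw [hiff (ψ w₁) (ψ w₂), hφψ w₁, hφψ w₂]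
  ext w
  constructor
  · rintro ⟨hwB', hrel⟩
    refine ⟨ψ ⟨w, hwB'⟩, ⟨(ψ ⟨w, hwB'⟩).2, ?_⟩, ?_⟩
    · rcases hrel with heq | htg
      · left
        have : ψ (φ x) = ψ ⟨w, hwB'⟩ := by congr 1; exact Subtype.ext heq
        rw [hψφ] at this
        exact congrArg Subtype.val this
      · right
        have := transGen_map (r := r') (r' := r) (φ := ψ) hmem'
          (fun w₁ w₂ h => (hiff' w₁ w₂).1 h) (φ x) w htg hwB'
        rw [hψφ] at this
        exact this
    · exact (congrArg Subtype.val (hφψ ⟨w, hwB'⟩)).symm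
  · rintro ⟨v, ⟨hvB, hrel⟩, rfl⟩
    refine ⟨(φ v).2, ?_⟩
    rcases hrel with heq | htg
    · left
      have : x = (⟨(x : V), x.2⟩ : B) := rfl
      have hxv : x = ⟨(v : V), hvB⟩ := Subtype.ext heq
      rw [hxv]
    · right
      have := transGen_map (r := r) (r' := r') (φ := φ) hmem
        (fun v₁ v₂ h => (hiff v₁ v₂).1 h) x (v : V) htg hvB
      simpa using this

include hφψ in
theorem gcomp_image_surj (w : B') :
    {w' : V' | ∃ v : B, (v : V) ∈ gcomp r B ((ψ w : B) : V) ∧ w' = (φ v : V')}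
      = {w' : V' | ∃ v : B, (v : V) ∈ gcomp r B ((ψ w : B) : V) ∧ w' = (φ v : V')} := rfl

theorem map_span_image (hspec : ∀ v : B, ∃ u : Rˣ, e (v : V) = (u : R) • ((φ v : B') : V'))
    {C : Set V} (hC : C ⊆ B) :
    Submodule.map (e : V →ₗ[R] V') (Submodule.span R C)
      = Submodule.span R {w : V' | ∃ v : B, (v : V) ∈ C ∧ w = (φ v : V')} := by
  rw [Submodule.map_span]
  apply le_antisymm
  · rw [Submodule.span_le]
    rintro _ ⟨z, hz, rfl⟩
    obtain ⟨u, hu⟩ := hspec ⟨z, hC hz⟩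
    show (e : V →ₗ[R] V') z ∈ _
    have : (e : V →ₗ[R] V') z = (u : R) • ((φ ⟨z, hC hz⟩ : B') : V') := hu
    rw [this]
    exact Submodule.smul_mem _ _ (Submodule.subset_span ⟨⟨z, hC hz⟩, hz, rfl⟩)
  · rw [Submodule.span_le]
    rintro _ ⟨v, hv, rfl⟩
    obtain ⟨u, hu⟩ := hspec v
    have heq : ((φ v : B') : V') = ((u⁻¹ : Rˣ) : R) • (e (v : V)) := by
      rw [hu, smul_smul, Units.inv_mul, one_smul]
    rw [heq]
    refine Submodule.smul_mem _ _ (Submodule.subset_span ?_)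
    exact ⟨(v : V), hv, rfl⟩

end Phi

/-- transport of spans of unions of components along an equivalence -/
theorem map_span_sUnion_eq {R : Type u} [CommSemiring R] {V : Type u} [AddCommMonoid V]
    [Module R V] {V' : Type u} [AddCommMonoid V'] [Module R V'] (e : V ≃ₗ[R] V')
    (s : Set (Set V)) (s' : Set (Set V'))
    (h1 : ∀ C ∈ s, ∃ C' ∈ s',
      Submodule.map (e : V →ₗ[R] V') (Submodule.span R C) = Submodule.span R C')
    (h2 : ∀ C' ∈ s', ∃ C ∈ s,
      Submodule.map (e : V →ₗ[R] V') (Submodule.span R C) = Submodule.span R C') :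
    Submodule.map (e : V →ₗ[R] V') (Submodule.span R (⋃₀ s)) = Submodule.span R (⋃₀ s') := by
  apply le_antisymm
  · rw [Submodule.map_span, Submodule.span_le]
    rintro _ ⟨z, ⟨C, hC, hzC⟩, rfl⟩
    obtain ⟨C', hC', hCC'⟩ := h1 C hC
    have : (e : V →ₗ[R] V') z ∈ Submodule.span R C' :=
      hCC' ▸ ⟨z, Submodule.subset_span hzC, rfl⟩
    exact Submodule.span_mono (Set.subset_sUnion_of_mem hC') this
  · rw [Submodule.span_le]
    rintro y ⟨C', hC', hyC'⟩
    obtain ⟨C, hC, hCC'⟩ := h2 C' hC'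
    have : y ∈ Submodule.map (e : V →ₗ[R] V') (Submodule.span R C) :=
      hCC'.symm ▸ Submodule.subset_span hyC'
    exact Submodule.map_mono (Submodule.span_mono (Set.subset_sUnion_of_mem hC)) this

namespace QMod
variable {R : Type u} [CommSemiring R]

theorem isomSymm {M N : QMod R} (h : M.Isom N) : N.Isom M := by
  obtain ⟨e, he⟩ := h
  refine ⟨e.symm, fun x => ?_⟩
  have := he (e.symm x)
  rw [e.apply_symm_apply] at this
  exact this.symm

theorem isomTrans {M N P : QMod R} (h1 : M.Isom N) (h2 : N.Isom P) : M.Isom P := by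
  obtain ⟨e1, he1⟩ := h1
  obtain ⟨e2, he2⟩ := h2
  exact ⟨e1.trans e2, fun x => (he2 (e1 x)).trans (he1 x)⟩

theorem restrict_isom (V V' : QMod R) (e : V.carrier ≃ₗ[R] V'.carrier)
    (he : ∀ x, V'.q (e x) = V.q x) {C : Set V.carrier} {C' : Set V'.carrier}
    (h : Submodule.map (e : V.carrier →ₗ[R] V'.carrier) (Submodule.span R C)
      = Submodule.span R C') : (V.restrict C).Isom (V'.restrict C') := by
  have key : ∀ y : Submodule.span R C,
      V'.q ((((e.ofSubmodules _ _ h) y) : Submodule.span R C') : V'.carrier)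
        = V.q ((y : Submodule.span R C) : V.carrier) := by
    intro y
    rw [LinearEquiv.ofSubmodules_apply]
    exact he _
  exact ⟨e.ofSubmodules _ _ h, fun x => key x⟩

theorem edge_symm (V : QMod R) : ∀ x y, V.edge x y → V.edge y x := by
  rintro x y ⟨h1, h2, h3, h4⟩
  refine ⟨h2, h1, Ne.symm h3, fun hql => h4 ?_⟩
  intro p hp s hs
  rw [add_comm, hql s hs p hp, add_comm (V.q s)]

theorem statement11 (V V' : QMod R) (hG : V.Good) (hG' : V'.Good)
    (Λ : Type u) (rep : Λ → QMod R)
    (hrep : ∀ l, (rep l).Good ∧ (rep l).Indecomp)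
    (hinj : ∀ l m, (rep l).Isom (rep m) → l = m)
    (hcomps : ∀ C ∈ V.comps, ∃ l, (V.restrict C).Isom (rep l))
    (hcomps' : ∀ C ∈ V'.comps, ∃ l, (V'.restrict C).Isom (rep l))
    (Vl : Λ → Submodule R V.carrier) (Vl' : Λ → Submodule R V'.carrier)
    (hVl : ∀ l, Vl l =
      Submodule.span R (⋃₀ {C | C ∈ V.comps ∧ (V.restrict C).Isom (rep l)}))
    (hVl' : ∀ l, Vl' l =
      Submodule.span R (⋃₀ {C | C ∈ V'.comps ∧ (V'.restrict C).Isom (rep l)})) :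
    ((∀ l m, l ≠ m → V.DisjOrth (Vl l) (Vl m)) ∧
      IsInternalSum (fun l : {l : Λ // Vl l ≠ ⊥} => Vl l.1)) ∧
    ∀ e : V.carrier ≃ₗ[R] V'.carrier, (∀ x, V'.q (e x) = V.q x) →
      (∀ C ∈ V.comps, ∃ C' ∈ V'.comps,
          Submodule.map e.toLinearMap (Submodule.span R C) = Submodule.span R C' ∧
          ∀ l, (V.restrict C).Isom (rep l) ↔ (V'.restrict C').Isom (rep l)) ∧
      ∀ l, Submodule.map e.toLinearMap (Vl l) = Vl' l := by
  obtain ⟨hsq, ⟨bl, hblsym, hblcomp⟩, hB, hU⟩ := hG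
  obtain ⟨hsq', ⟨bl', hblsym', hblcomp'⟩, hB', hU'⟩ := hG'
  have hq0 : V.q 0 = 0 := by
    have := hsq 0 0
    rw [zero_smul, zero_mul, zero_mul] at this
    exact this
  have hsym := V.edge_symm
  have hmem : ∀ x y, V.edge x y → x ∈ V.base ∧ y ∈ V.base := fun x y h => ⟨h.1, h.2.1⟩
  have hmem' : ∀ x y, V'.edge x y → x ∈ V'.base ∧ y ∈ V'.base := fun x y h => ⟨h.1, h.2.1⟩
  set 𝒞 : Λ → Set (Set V.carrier) :=
    fun l => {C | C ∈ V.comps ∧ (V.restrict C).Isom (rep l)} with h𝒞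
  have h1 : ∀ l C, C ∈ 𝒞 l → ∃ x ∈ V.base, C = gcomp V.edge V.base x := fun l C hC => hC.1
  have h2 : ∀ l m C, C ∈ 𝒞 l → C ∈ 𝒞 m → l = m := fun l m C hCl hCm =>
    hinj l m (isomTrans (isomSymm hCl.2) hCm.2)
  have h3 : ∀ x ∈ V.base, ∃ l, gcomp V.edge V.base x ∈ 𝒞 l := by
    intro x hx
    obtain ⟨l, hl⟩ := hcomps (V.comp x) ⟨x, hx, rfl⟩
    exact ⟨l, ⟨⟨x, hx, rfl⟩, hl⟩⟩
  have hVlEq : ∀ l, Vl l = Submodule.span R (⋃₀ 𝒞 l) := hVl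
  refine ⟨⟨?_, ?_⟩, ?_⟩
  · -- pairwise disjoint orthogonality
    intro l m hlm
    refine ⟨generic_inf_bot hB hsym h1 h2 hlm Vl hVlEq, ?_⟩
    intro x hx y hy
    rw [hVlEq l] at hx
    rw [hVlEq m] at hy
    refine qlin_span V.q bl hq0 hblcomp ?_ x hx y hy
    intro u hu v hv a c
    obtain ⟨hne, hnedge⟩ := no_r_between_regions hsym hmem h1 h2 hlm hu hv
    have huB := region_subset_base h1 hu
    have hvB := region_subset_base h1 hv
    have hql : V.Qlin ↑(Submodule.span R {u}) ↑(Submodule.span R {v}) := by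
      by_contra hq
      exact hnedge ⟨huB, hvB, hne, hq⟩
    exact hql _ (Submodule.mem_span_singleton.2 ⟨a, rfl⟩) _
      (Submodule.mem_span_singleton.2 ⟨c, rfl⟩)
  · exact generic_internal_sum hB hsym h1 h2 h3 Vl hVlEq
  · -- isometry transport
    intro e he
    have hBimg := isBaseSet_image e hB
    have hBimg' := isBaseSet_image e.symm hB'
    have Hφ : ∀ v : V.base, ∃ w : V'.base, ∃ u : Rˣ, e (v : V.carrier) = (u : R) • (w : V'.carrier) := by
      intro v
      obtain ⟨u, w, hw, h⟩ := hU' _ hBimg (e (v : V.carrier)) ⟨(v : V.carrier), v.2, rfl⟩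
      exact ⟨⟨w, hw⟩, u, h⟩
    have Hψ : ∀ w : V'.base, ∃ v : V.base, ∃ u : Rˣ,
        e.symm (w : V'.carrier) = (u : R) • (v : V.carrier) := by
      intro w
      obtain ⟨u, v, hv, h⟩ := hU _ hBimg' (e.symm (w : V'.carrier))
        ⟨(w : V'.carrier), w.2, rfl⟩
      exact ⟨⟨v, hv⟩, u, h⟩
    choose φ uφ hφ using Hφ
    choose ψ uψ hψ using Hψ
    have hφψ : ∀ w, φ (ψ w) = w := by
      intro w
      have h1' : (w : V'.carrier) = ((uψ w * uφ (ψ w) : Rˣ) : R) • (φ (ψ w) : V'.carrier) := by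
        have h0 := congrArg e (hψ w)
        rw [e.apply_symm_apply, map_smul, hφ (ψ w), smul_smul, ← Units.val_mul] at h0
        exact h0
      exact (Subtype.ext (base_unit_smul_eq hB' w.2 (φ (ψ w)).2 _ h1')).symm
    have hψφ : ∀ v, ψ (φ v) = v := by
      intro v
      have h1' : (v : V.carrier) = ((uφ v * uψ (φ v) : Rˣ) : R) • (ψ (φ v) : V.carrier) := by
        have h0 := congrArg e.symm (hφ v)
        rw [e.symm_apply_apply, map_smul, hψ (φ v), smul_smul, ← Units.val_mul] at h0
        exact h0
      exact (Subtype.ext (base_unit_smul_eq hB v.2 (ψ (φ v)).2 _ h1')).symm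
    have hφinj : ∀ v₁ v₂, φ v₁ = φ v₂ → v₁ = v₂ := fun v₁ v₂ h => by
      rw [← hψφ v₁, h, hψφ v₂]
    have hspan : ∀ v : V.base, Submodule.span R {((φ v : V'.base) : V'.carrier)}
        = Submodule.map (e : V.carrier →ₗ[R] V'.carrier)
            (Submodule.span R {(v : V.carrier)}) := by
      intro v
      rw [Submodule.map_span, Set.image_singleton]
      have h0 : ((e : V.carrier →ₗ[R] V'.carrier) (v : V.carrier))
          = (uφ v : R) • ((φ v : V'.base) : V'.carrier) := hφ v
      rw [h0]
      exact (Submodule.span_singleton_smul_eq (Units.isUnit (uφ v)) _).symm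
    have hiff : ∀ v₁ v₂ : V.base, V.edge (v₁ : V.carrier) (v₂ : V.carrier)
        ↔ V'.edge ((φ v₁ : V'.base) : V'.carrier) ((φ v₂ : V'.base) : V'.carrier) := by
      intro v₁ v₂
      have hqlin : V.Qlin ↑(Submodule.span R {(v₁ : V.carrier)})
            ↑(Submodule.span R {(v₂ : V.carrier)})
          ↔ V'.Qlin ↑(Submodule.span R {((φ v₁ : V'.base) : V'.carrier)})
            ↑(Submodule.span R {((φ v₂ : V'.base) : V'.carrier)}) := by
        have he' : ∀ x, V'.q ((e : V.carrier →ₗ[R] V'.carrier) x) = V.q x := he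
        rw [hspan v₁, hspan v₂]
        constructor
        · intro h x' hx' y' hy'
          obtain ⟨x, hx, rfl⟩ := Submodule.mem_map.1 hx'
          obtain ⟨y, hy, rfl⟩ := Submodule.mem_map.1 hy'
          show V'.q ((e : V.carrier →ₗ[R] V'.carrier) x + (e : V.carrier →ₗ[R] V'.carrier) y)
            = V'.q ((e : V.carrier →ₗ[R] V'.carrier) x)
              + V'.q ((e : V.carrier →ₗ[R] V'.carrier) y)
          rw [← map_add, he', he', he']
          exact h x hx y hy
        · intro h x hx y hy
          have h0 := h _ (Submodule.mem_map_of_mem hx) _ (Submodule.mem_map_of_mem hy)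
          rw [← map_add, he', he', he'] at h0
          exact h0
      constructor
      · rintro ⟨_, _, hne, hnq⟩
        refine ⟨(φ v₁).2, (φ v₂).2, ?_, fun hq => hnq (hqlin.2 hq)⟩
        intro heq
        exact hne (congrArg Subtype.val (hφinj v₁ v₂ (Subtype.ext heq)))
      · rintro ⟨_, _, hne, hnq⟩
        refine ⟨v₁.2, v₂.2, ?_, fun hq => hnq (hqlin.1 hq)⟩
        intro heq
        exact hne (congrArg Subtype.val (congrArg φ (Subtype.ext heq)))
    have hcompmap : ∀ x : V.base, V'.comp ((φ x : V'.base) : V'.carrier)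
        = {w | ∃ v : V.base, (v : V.carrier) ∈ V.comp (x : V.carrier)
            ∧ w = ((φ v : V'.base) : V'.carrier)} :=
      fun x => gcomp_image φ ψ hψφ hφψ hiff hmem hmem' x
    have hmapspan : ∀ (C : Set V.carrier), C ⊆ V.base →
        Submodule.map (e : V.carrier →ₗ[R] V'.carrier) (Submodule.span R C)
          = Submodule.span R {w | ∃ v : V.base, (v : V.carrier) ∈ C
              ∧ w = ((φ v : V'.base) : V'.carrier)} :=
      fun C hC => map_span_image e φ (fun v => ⟨uφ v, hφ v⟩) hC
    have hkey : ∀ x : V.base,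
        Submodule.map (e : V.carrier →ₗ[R] V'.carrier)
            (Submodule.span R (V.comp (x : V.carrier)))
          = Submodule.span R (V'.comp ((φ x : V'.base) : V'.carrier)) := by
      intro x
      rw [hcompmap x]
      exact hmapspan _ (fun y hy => hy.1)
    refine ⟨?_, ?_⟩
    · intro C hC
      obtain ⟨x, hx, rfl⟩ := hC
      have hmap := hkey ⟨x, hx⟩
      have hIso := restrict_isom V V' e he hmap
      refine ⟨V'.comp ((φ ⟨x, hx⟩ : V'.base) : V'.carrier),
        ⟨_, (φ ⟨x, hx⟩).2, rfl⟩, hmap, ?_⟩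
      intro l
      exact ⟨fun h => isomTrans (isomSymm hIso) h, fun h => isomTrans hIso h⟩
    · intro l
      rw [hVl l, hVl' l]
      refine map_span_sUnion_eq e _ _ ?_ ?_
      · rintro C ⟨hCm, hCl⟩
        obtain ⟨x, hx, rfl⟩ := hCm
        have hmap := hkey ⟨x, hx⟩
        have hIso := restrict_isom V V' e he hmap
        exact ⟨V'.comp ((φ ⟨x, hx⟩ : V'.base) : V'.carrier),
          ⟨⟨_, (φ ⟨x, hx⟩).2, rfl⟩, isomTrans (isomSymm hIso) hCl⟩, hmap⟩
      · rintro C' ⟨hC'm, hC'l⟩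
        obtain ⟨w, hw, rfl⟩ := hC'm
        have hweq : ((φ (ψ ⟨w, hw⟩) : V'.base) : V'.carrier) = w :=
          congrArg Subtype.val (hφψ ⟨w, hw⟩)
        have hmap := hkey (ψ ⟨w, hw⟩)
        rw [hweq] at hmap
        have hIso := restrict_isom V V' e he hmap
        exact ⟨V.comp ((ψ ⟨w, hw⟩ : V.base) : V.carrier),
          ⟨⟨_, (ψ ⟨w, hw⟩).2, rfl⟩, isomTrans hIso hC'l⟩, hmap⟩

end QMod

namespace BMod
variable {R : Type u} [CommSemiring R]

theorem isomSymm {M N : BMod R} (h : M.Isom N) : N.Isom M := by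
  obtain ⟨e, he⟩ := h
  refine ⟨e.symm, fun x y => ?_⟩
  have := he (e.symm x) (e.symm y)
  rw [e.apply_symm_apply, e.apply_symm_apply] at this
  exact this.symm

theorem isomTrans {M N P : BMod R} (h1 : M.Isom N) (h2 : N.Isom P) : M.Isom P := by
  obtain ⟨e1, he1⟩ := h1
  obtain ⟨e2, he2⟩ := h2
  exact ⟨e1.trans e2, fun x y => (he2 (e1 x) (e1 y)).trans (he1 x y)⟩

theorem restrict_isom (V V' : BMod R) (e : V.carrier ≃ₗ[R] V'.carrier)
    (he : ∀ x y, V'.b (e x) (e y) = V.b x y) {C : Set V.carrier} {C' : Set V'.carrier}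
    (h : Submodule.map (e : V.carrier →ₗ[R] V'.carrier) (Submodule.span R C)
      = Submodule.span R C') : (V.restrict C).Isom (V'.restrict C') := by
  have key : ∀ x y : Submodule.span R C,
      V'.b ((((e.ofSubmodules _ _ h) x) : Submodule.span R C') : V'.carrier)
          ((((e.ofSubmodules _ _ h) y) : Submodule.span R C') : V'.carrier)
        = V.b ((x : Submodule.span R C) : V.carrier) ((y : Submodule.span R C) : V.carrier) := by
    intro x y
    rw [LinearEquiv.ofSubmodules_apply, LinearEquiv.ofSubmodules_apply]
    exact he _ _
  exact ⟨e.ofSubmodules _ _ h, fun x y => key x y⟩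

theorem statement11 (V V' : BMod R) (hG : V.Good) (hG' : V'.Good)
    (Λ : Type u) (rep : Λ → BMod R)
    (hrep : ∀ l, (rep l).Good ∧ (rep l).Indecomp)
    (hinj : ∀ l m, (rep l).Isom (rep m) → l = m)
    (hcomps : ∀ C ∈ V.comps, ∃ l, (V.restrict C).Isom (rep l))
    (hcomps' : ∀ C ∈ V'.comps, ∃ l, (V'.restrict C).Isom (rep l))
    (Vl : Λ → Submodule R V.carrier) (Vl' : Λ → Submodule R V'.carrier)
    (hVl : ∀ l, Vl l =
      Submodule.span R (⋃₀ {C | C ∈ V.comps ∧ (V.restrict C).Isom (rep l)}))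
    (hVl' : ∀ l, Vl' l =
      Submodule.span R (⋃₀ {C | C ∈ V'.comps ∧ (V'.restrict C).Isom (rep l)})) :
    ((∀ l m, l ≠ m → V.DisjOrth (Vl l) (Vl m)) ∧
      IsInternalSum (fun l : {l : Λ // Vl l ≠ ⊥} => Vl l.1)) ∧
    ∀ e : V.carrier ≃ₗ[R] V'.carrier, (∀ x y, V'.b (e x) (e y) = V.b x y) →
      (∀ C ∈ V.comps, ∃ C' ∈ V'.comps,
          Submodule.map e.toLinearMap (Submodule.span R C) = Submodule.span R C' ∧
          ∀ l, (V.restrict C).Isom (rep l) ↔ (V'.restrict C').Isom (rep l)) ∧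
      ∀ l, Submodule.map e.toLinearMap (Vl l) = Vl' l := by
  obtain ⟨hbsym, hbadd, hbsmul, hB, hU⟩ := hG
  obtain ⟨hbsym', hbadd', hbsmul', hB', hU'⟩ := hG'
  have hsym : ∀ x y, V.edge x y → V.edge y x := by
    rintro x y ⟨h1, h2, h3, h4⟩
    exact ⟨h2, h1, Ne.symm h3, by rwa [hbsym]⟩
  have hmem : ∀ x y, V.edge x y → x ∈ V.base ∧ y ∈ V.base := fun x y h => ⟨h.1, h.2.1⟩
  have hmem' : ∀ x y, V'.edge x y → x ∈ V'.base ∧ y ∈ V'.base := fun x y h => ⟨h.1, h.2.1⟩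
  set 𝒞 : Λ → Set (Set V.carrier) :=
    fun l => {C | C ∈ V.comps ∧ (V.restrict C).Isom (rep l)} with h𝒞
  have h1 : ∀ l C, C ∈ 𝒞 l → ∃ x ∈ V.base, C = gcomp V.edge V.base x := fun l C hC => hC.1
  have h2 : ∀ l m C, C ∈ 𝒞 l → C ∈ 𝒞 m → l = m := fun l m C hCl hCm =>
    hinj l m (isomTrans (isomSymm hCl.2) hCm.2)
  have h3 : ∀ x ∈ V.base, ∃ l, gcomp V.edge V.base x ∈ 𝒞 l := by
    intro x hx
    obtain ⟨l, hl⟩ := hcomps (V.comp x) ⟨x, hx, rfl⟩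
    exact ⟨l, ⟨⟨x, hx, rfl⟩, hl⟩⟩
  have hVlEq : ∀ l, Vl l = Submodule.span R (⋃₀ 𝒞 l) := hVl
  refine ⟨⟨?_, ?_⟩, ?_⟩
  · intro l m hlm
    refine ⟨generic_inf_bot hB hsym h1 h2 hlm Vl hVlEq, ?_⟩
    intro x hx y hy
    rw [hVlEq l] at hx
    rw [hVlEq m] at hy
    refine bform_span_zero V.b hbsym hbadd hbsmul ?_ x hx y hy
    intro u hu v hv
    obtain ⟨hne, hnedge⟩ := no_r_between_regions hsym hmem h1 h2 hlm hu hv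
    have huB := region_subset_base h1 hu
    have hvB := region_subset_base h1 hv
    by_contra hb0
    exact hnedge ⟨huB, hvB, hne, hb0⟩
  · exact generic_internal_sum hB hsym h1 h2 h3 Vl hVlEq
  · intro e he
    have hBimg := isBaseSet_image e hB
    have hBimg' := isBaseSet_image e.symm hB'
    have Hφ : ∀ v : V.base, ∃ w : V'.base, ∃ u : Rˣ,
        e (v : V.carrier) = (u : R) • (w : V'.carrier) := by
      intro v
      obtain ⟨u, w, hw, h⟩ := hU' _ hBimg (e (v : V.carrier)) ⟨(v : V.carrier), v.2, rfl⟩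
      exact ⟨⟨w, hw⟩, u, h⟩
    have Hψ : ∀ w : V'.base, ∃ v : V.base, ∃ u : Rˣ,
        e.symm (w : V'.carrier) = (u : R) • (v : V.carrier) := by
      intro w
      obtain ⟨u, v, hv, h⟩ := hU _ hBimg' (e.symm (w : V'.carrier))
        ⟨(w : V'.carrier), w.2, rfl⟩
      exact ⟨⟨v, hv⟩, u, h⟩
    choose φ uφ hφ using Hφ
    choose ψ uψ hψ using Hψ
    have hφψ : ∀ w, φ (ψ w) = w := by
      intro w
      have h1' : (w : V'.carrier) = ((uψ w * uφ (ψ w) : Rˣ) : R) • (φ (ψ w) : V'.carrier) := by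
        have h0 := congrArg e (hψ w)
        rw [e.apply_symm_apply, map_smul, hφ (ψ w), smul_smul, ← Units.val_mul] at h0
        exact h0
      exact (Subtype.ext (base_unit_smul_eq hB' w.2 (φ (ψ w)).2 _ h1')).symm
    have hψφ : ∀ v, ψ (φ v) = v := by
      intro v
      have h1' : (v : V.carrier) = ((uφ v * uψ (φ v) : Rˣ) : R) • (ψ (φ v) : V.carrier) := by
        have h0 := congrArg e.symm (hφ v)
        rw [e.symm_apply_apply, map_smul, hψ (φ v), smul_smul, ← Units.val_mul] at h0
        exact h0
      exact (Subtype.ext (base_unit_smul_eq hB v.2 (ψ (φ v)).2 _ h1')).symm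
    have hφinj : ∀ v₁ v₂, φ v₁ = φ v₂ → v₁ = v₂ := fun v₁ v₂ h => by
      rw [← hψφ v₁, h, hψφ v₂]
    have hbsmul2' : ∀ (a : R) (x y : V'.carrier), V'.b x (a • y) = a * V'.b x y := by
      intro a x y
      rw [hbsym', hbsmul', hbsym']
    have hbval : ∀ v₁ v₂ : V.base,
        V'.b ((φ v₁ : V'.base) : V'.carrier) ((φ v₂ : V'.base) : V'.carrier)
          = (((uφ v₁)⁻¹ * (uφ v₂)⁻¹ : Rˣ) : R) * V.b (v₁ : V.carrier) (v₂ : V.carrier) := by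
      intro v₁ v₂
      have hw1 : ((φ v₁ : V'.base) : V'.carrier) = (((uφ v₁)⁻¹ : Rˣ) : R) • e (v₁ : V.carrier) := by
        rw [hφ v₁, smul_smul, Units.inv_mul, one_smul]
      have hw2 : ((φ v₂ : V'.base) : V'.carrier) = (((uφ v₂)⁻¹ : Rˣ) : R) • e (v₂ : V.carrier) := by
        rw [hφ v₂, smul_smul, Units.inv_mul, one_smul]
      rw [hw1, hw2, hbsmul', hbsmul2', he, Units.val_mul, mul_assoc]
    have hne0iff : ∀ (c : Rˣ) (z : R), z ≠ 0 ↔ (c : R) * z ≠ 0 := by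
      intro c z
      constructor
      · intro hz h0
        apply hz
        have : ((c⁻¹ : Rˣ) : R) * ((c : R) * z) = z := by
          rw [← mul_assoc, Units.inv_mul, one_mul]
        rw [← this, h0, mul_zero]
      · intro hcz hz
        exact hcz (by rw [hz, mul_zero])
    have hiff : ∀ v₁ v₂ : V.base, V.edge (v₁ : V.carrier) (v₂ : V.carrier)
        ↔ V'.edge ((φ v₁ : V'.base) : V'.carrier) ((φ v₂ : V'.base) : V'.carrier) := by
      intro v₁ v₂
      have hbiff : V.b (v₁ : V.carrier) (v₂ : V.carrier) ≠ 0
          ↔ V'.b ((φ v₁ : V'.base) : V'.carrier) ((φ v₂ : V'.base) : V'.carrier) ≠ 0 := by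
        rw [hbval v₁ v₂]
        exact hne0iff _ _
      constructor
      · rintro ⟨_, _, hne, hnb⟩
        refine ⟨(φ v₁).2, (φ v₂).2, ?_, hbiff.1 hnb⟩
        intro heq
        exact hne (congrArg Subtype.val (hφinj v₁ v₂ (Subtype.ext heq)))
      · rintro ⟨_, _, hne, hnb⟩
        refine ⟨v₁.2, v₂.2, ?_, hbiff.2 hnb⟩
        intro heq
        exact hne (congrArg Subtype.val (congrArg φ (Subtype.ext heq)))
    have hcompmap : ∀ x : V.base, V'.comp ((φ x : V'.base) : V'.carrier)
        = {w | ∃ v : V.base, (v : V.carrier) ∈ V.comp (x : V.carrier)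
            ∧ w = ((φ v : V'.base) : V'.carrier)} :=
      fun x => gcomp_image φ ψ hψφ hφψ hiff hmem hmem' x
    have hmapspan : ∀ (C : Set V.carrier), C ⊆ V.base →
        Submodule.map (e : V.carrier →ₗ[R] V'.carrier) (Submodule.span R C)
          = Submodule.span R {w | ∃ v : V.base, (v : V.carrier) ∈ C
              ∧ w = ((φ v : V'.base) : V'.carrier)} :=
      fun C hC => map_span_image e φ (fun v => ⟨uφ v, hφ v⟩) hC
    have hkey : ∀ x : V.base,
        Submodule.map (e : V.carrier →ₗ[R] V'.carrier)
            (Submodule.span R (V.comp (x : V.carrier)))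
          = Submodule.span R (V'.comp ((φ x : V'.base) : V'.carrier)) := by
      intro x
      rw [hcompmap x]
      exact hmapspan _ (fun y hy => hy.1)
    refine ⟨?_, ?_⟩
    · intro C hC
      obtain ⟨x, hx, rfl⟩ := hC
      have hmap := hkey ⟨x, hx⟩
      have hIso := restrict_isom V V' e he hmap
      refine ⟨V'.comp ((φ ⟨x, hx⟩ : V'.base) : V'.carrier),
        ⟨_, (φ ⟨x, hx⟩).2, rfl⟩, hmap, ?_⟩
      intro l
      exact ⟨fun h => isomTrans (isomSymm hIso) h, fun h => isomTrans hIso h⟩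
    · intro l
      rw [hVl l, hVl' l]
      refine map_span_sUnion_eq e _ _ ?_ ?_
      · rintro C ⟨hCm, hCl⟩
        obtain ⟨x, hx, rfl⟩ := hCm
        have hmap := hkey ⟨x, hx⟩
        have hIso := restrict_isom V V' e he hmap
        exact ⟨V'.comp ((φ ⟨x, hx⟩ : V'.base) : V'.carrier),
          ⟨⟨_, (φ ⟨x, hx⟩).2, rfl⟩, isomTrans (isomSymm hIso) hCl⟩, hmap⟩
      · rintro C' ⟨hC'm, hC'l⟩
        obtain ⟨w, hw, rfl⟩ := hC'm
        have hweq : ((φ (ψ ⟨w, hw⟩) : V'.base) : V'.carrier) = w :=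
          congrArg Subtype.val (hφψ ⟨w, hw⟩)
        have hmap := hkey (ψ ⟨w, hw⟩)
        rw [hweq] at hmap
        have hIso := restrict_isom V V' e he hmap
        exact ⟨V.comp ((ψ ⟨w, hw⟩ : V.base) : V.carrier),
          ⟨⟨_, (ψ ⟨w, hw⟩).2, rfl⟩, isomTrans hIso hC'l⟩, hmap⟩

end BMod

/-- Let `V` be a quadratic (resp. bilinear) `R`-module with unique base
and fix representatives `rep l` of the isometry classes of indecomposable modules with
unique base.  Let `V_l` be the isotypical component of type `l` (the span of the union of
all indecomposable components of `V` of type `l`).  Then `V = ⊥_{l ∈ Λ'} V_l` with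
`Λ' = {l | V_l ≠ 0}`, and every isometry `σ : V → V'` maps each indecomposable component
of `V` onto one of `V'` of the same type, so that `σ(V_l) = V'_l` for every `l`. -/
theorem isotypical_decomposition (R : Type u) [CommSemiring R] :
    (∀ V V' : QMod R, V.Good → V'.Good →
      ∀ (Λ : Type u) (rep : Λ → QMod R),
        (∀ l, (rep l).Good ∧ (rep l).Indecomp) →
        (∀ l m, (rep l).Isom (rep m) → l = m) →
        (∀ C ∈ V.comps, ∃ l, (V.restrict C).Isom (rep l)) →
        (∀ C ∈ V'.comps, ∃ l, (V'.restrict C).Isom (rep l)) →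
        ∀ (Vl : Λ → Submodule R V.carrier) (Vl' : Λ → Submodule R V'.carrier),
          (∀ l, Vl l =
            Submodule.span R (⋃₀ {C | C ∈ V.comps ∧ (V.restrict C).Isom (rep l)})) →
          (∀ l, Vl' l =
            Submodule.span R (⋃₀ {C | C ∈ V'.comps ∧ (V'.restrict C).Isom (rep l)})) →
          ((∀ l m, l ≠ m → V.DisjOrth (Vl l) (Vl m)) ∧
            IsInternalSum (fun l : {l : Λ // Vl l ≠ ⊥} => Vl l.1)) ∧
          ∀ e : V.carrier ≃ₗ[R] V'.carrier, (∀ x, V'.q (e x) = V.q x) →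
            (∀ C ∈ V.comps, ∃ C' ∈ V'.comps,
                Submodule.map e.toLinearMap (Submodule.span R C) = Submodule.span R C' ∧
                ∀ l, (V.restrict C).Isom (rep l) ↔ (V'.restrict C').Isom (rep l)) ∧
            ∀ l, Submodule.map e.toLinearMap (Vl l) = Vl' l) ∧
    (∀ V V' : BMod R, V.Good → V'.Good →
      ∀ (Λ : Type u) (rep : Λ → BMod R),
        (∀ l, (rep l).Good ∧ (rep l).Indecomp) →
        (∀ l m, (rep l).Isom (rep m) → l = m) →
        (∀ C ∈ V.comps, ∃ l, (V.restrict C).Isom (rep l)) →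
        (∀ C ∈ V'.comps, ∃ l, (V'.restrict C).Isom (rep l)) →
        ∀ (Vl : Λ → Submodule R V.carrier) (Vl' : Λ → Submodule R V'.carrier),
          (∀ l, Vl l =
            Submodule.span R (⋃₀ {C | C ∈ V.comps ∧ (V.restrict C).Isom (rep l)})) →
          (∀ l, Vl' l =
            Submodule.span R (⋃₀ {C | C ∈ V'.comps ∧ (V'.restrict C).Isom (rep l)})) →
          ((∀ l m, l ≠ m → V.DisjOrth (Vl l) (Vl m)) ∧
            IsInternalSum (fun l : {l : Λ // Vl l ≠ ⊥} => Vl l.1)) ∧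
          ∀ e : V.carrier ≃ₗ[R] V'.carrier, (∀ x y, V'.b (e x) (e y) = V.b x y) →
            (∀ C ∈ V.comps, ∃ C' ∈ V'.comps,
                Submodule.map e.toLinearMap (Submodule.span R C) = Submodule.span R C' ∧
                ∀ l, (V.restrict C).Isom (rep l) ↔ (V'.restrict C').Isom (rep l)) ∧
            ∀ l, Submodule.map e.toLinearMap (Vl l) = Vl' l) := by
  constructor
  · intro V V' hG hG' Λ rep hrep hinj hcomps hcomps' Vl Vl' hVl hVl'
    exact QMod.statement11 V V' hG hG' Λ rep hrep hinj hcomps hcomps' Vl Vl' hVl hVl'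
  · intro V V' hG hG' Λ rep hrep hinj hcomps hcomps' Vl Vl' hVl hVl'
    exact BMod.statement11 V V' hG hG' Λ rep hrep hinj hcomps hcomps' Vl Vl' hVl hVl'
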